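/- Let M be an n×m (0,1)-matrix of rank m with Mλ = 𝟙. If I ⊆ [m] satisfies Σ_{i∈I} λ_i = 1, then the matrix z_I(M), obtained by complementing the columns indexed by I, has rank strictly less than m. -/
import Mathlib


/-- `z_I(M)`: the matrix obtained from `M` by complementing (replacing `a` by `𝟙 − a`)
each column indexed by `I`. -/
def zI {n m : ℕ} (M : Matrix (Fin n) (Fin m) ℝ) (I : Finset (Fin m)) :
    Matrix (Fin n) (Fin m) ℝ :=
  fun i j => if j ∈ I then 1 - M i j else M i j

/-- If `M` is a `(0,1)`-matrix of rank `m` with `Mλ = 𝟙` and `∑_{i∈I} λ_i = 1`,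
then `z_I(M)` has rank strictly less than `m`. -/
theorem stmt10 (n m : ℕ) (M : Matrix (Fin n) (Fin m) ℝ)
    (h01 : ∀ i j, M i j = 0 ∨ M i j = 1) (hrk : M.rank = m)
    (l : Fin m → ℝ) (hMl : M.mulVec l = 1)
    (I : Finset (Fin m)) (hI : ∑ i ∈ I, l i = 1) :
    (zI M I).rank < m := by
  set v : Fin m → ℝ := fun j => if j ∈ I then l j else -l j with hv
  have hvec : (zI M I).mulVec v = 0 := by
    funext i
    have hM : M.mulVec l i = 1 := by rw [hMl]; rfl
    simp only [Matrix.mulVec, dotProduct, zI, hv] at hM ⊢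
    rw [← Finset.sum_filter_add_sum_filter_not Finset.univ (· ∈ I)] at hM ⊢
    have e1 : ∑ j ∈ Finset.univ.filter (· ∈ I),
        (if j ∈ I then 1 - M i j else M i j) * (if j ∈ I then l j else -l j)
        = ∑ j ∈ Finset.univ.filter (· ∈ I), ((l j) - M i j * l j) := by
      apply Finset.sum_congr rfl; intro j hj
      simp only [Finset.mem_filter] at hj
      simp [hj.2]; ring
    have e2 : ∑ j ∈ Finset.univ.filter (¬ · ∈ I),
        (if j ∈ I then 1 - M i j else M i j) * (if j ∈ I then l j else -l j)
        = ∑ j ∈ Finset.univ.filter (¬ · ∈ I), (- (M i j * l j)) := by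
      apply Finset.sum_congr rfl; intro j hj
      simp only [Finset.mem_filter] at hj
      simp [hj.2]
    rw [e1, e2, Finset.sum_sub_distrib, Finset.sum_neg_distrib]
    have hsumI : ∑ j ∈ Finset.univ.filter (· ∈ I), l j = 1 := by
      rw [Finset.filter_mem_eq_inter] at *
      simpa [Finset.univ_inter] using hI
    rw [hsumI]
    show _ = (0 : Fin n → ℝ) i
    simp only [Pi.zero_apply]
    linarith [hM]
  have hvne : v ≠ 0 := by
    intro h0
    have : ∑ i ∈ I, l i = 0 := by
      apply Finset.sum_eq_zero
      intro j hj
      have := congrFun h0 j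
      simp [hv, hj] at this
      exact this
    rw [hI] at this; norm_num at this
  -- kernel nontrivial ⇒ rank < m
  have hker : v ∈ LinearMap.ker (zI M I).mulVecLin := by
    simpa [Matrix.mulVecLin_apply] using hvec
  have hkerpos : 0 < Module.finrank ℝ (LinearMap.ker (zI M I).mulVecLin) := by
    apply Module.finrank_pos_iff_exists_ne_zero.mpr
    exact ⟨⟨v, hker⟩, by simpa [Submodule.mk_eq_zero] using hvne⟩
  have hrn := LinearMap.finrank_range_add_finrank_ker (zI M I).mulVecLin
  have : (zI M I).rank = Module.finrank ℝ (LinearMap.range (zI M I).mulVecLin) := rfl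
  rw [this]
  have hfin : Module.finrank ℝ (Fin m → ℝ) = m := by simp
  omega
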